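/- Let P = {x ∈ [0,2]² : 2x₁ + x₂ ≤ 5, −2x₁ + 3x₂ ≤ 3} and let P_L = {(x,z) ∈ ℝ² × [0,1]⁴ : x ∈ P, x_i = z_{i1} + 2z_{i2} for i = 1,2} be its logarithmic binary extended formulation. Then proj_x(SC(P_L)) ⊊ SC(P), where SC(P_L) is the split closure of P_L with respect to all six variables and SC(P) is the split closure of P with respect to both x-variables. In particular, the point (5/4, 3/2) belongs to SC(P), while the inequality x₂ ≤ 7/5 is valid for SC(P_L). -/
import Mathlib

open Set

/-- The split closure of `P` with respect to a family `Λ` of (integral) linear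
functionals. -/
noncomputable def splitClosure {E : Type*} [AddCommGroup E] [Module ℝ E]
    (Λ : Set (E → ℝ)) (P : Set E) : Set E :=
  ⋂ f ∈ Λ, ⋂ c : ℤ, convexHull ℝ (P \ {x | (c : ℝ) < f x ∧ f x < c + 1})

/-- Split functionals on `ℝ²` with integer coefficients on both variables. -/
def splitsXY : Set ((ℝ × ℝ) → ℝ) :=
  {f | ∃ π₁ π₂ : ℤ, f = fun x => (π₁ : ℝ) * x.1 + (π₂ : ℝ) * x.2}

/-- Split functionals on the extended space `ℝ² × (ℝ² × ℝ²)` with integer coefficients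
on all six variables. -/
def splitsAll : Set (((ℝ × ℝ) × ((ℝ × ℝ) × (ℝ × ℝ))) → ℝ) :=
  {f | ∃ a₁ a₂ c₁₁ c₁₂ c₂₁ c₂₂ : ℤ, f = fun p =>
    (a₁ : ℝ) * p.1.1 + (a₂ : ℝ) * p.1.2 +
    (c₁₁ : ℝ) * p.2.1.1 + (c₁₂ : ℝ) * p.2.1.2 + (c₂₁ : ℝ) * p.2.2.1 + (c₂₂ : ℝ) * p.2.2.2}

/-- No integer strictly between `c` and `c+1` (real version). -/
lemma not_strip (c k : ℤ) (x : ℝ) (hx : x = (k : ℝ)) :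
    ¬((c : ℝ) < x ∧ x < (c : ℝ) + 1) := by
  rintro ⟨h1, h2⟩
  rw [hx] at h1 h2
  have b1 : c < k := by exact_mod_cast h1
  have b2 : (k : ℝ) < ((c + 1 : ℤ) : ℝ) := by push_cast; linarith
  have b3 : k < c + 1 := by exact_mod_cast b2
  omega

/-- A convex combination of two points of a set lies in its convex hull. -/
lemma small_case {E : Type*} [AddCommGroup E] [Module ℝ E]
    (P S : Set E) (p q x : E) (a b : ℝ)
    (hpP : p ∈ P) (hqP : q ∈ P) (hpS : p ∉ S) (hqS : q ∉ S)
    (ha : 0 ≤ a) (hb : 0 ≤ b) (hab : a + b = 1) (hx : a • p + b • q = x) :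
    x ∈ convexHull ℝ (P \ S) := by
  have h := segment_subset_convexHull (𝕜 := ℝ) (s := P \ S) (x := p) (y := q) ⟨hpP, hpS⟩ ⟨hqP, hqS⟩
  exact h ⟨a, b, ha, hb, hab, hx⟩

set_option maxHeartbeats 2000000 in
lemma key_mem (P : Set (ℝ × ℝ))
    (hP : P = {x | 0 ≤ x.1 ∧ x.1 ≤ 2 ∧ 0 ≤ x.2 ∧ x.2 ≤ 2 ∧
      2 * x.1 + x.2 ≤ 5 ∧ -2 * x.1 + 3 * x.2 ≤ 3}) :
    ((5 / 4 : ℝ), (3 / 2 : ℝ)) ∈ splitClosure splitsXY P := by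
  rw [splitClosure]
  refine mem_iInter₂.mpr ?_
  rintro f ⟨π₁, π₂, rfl⟩
  refine mem_iInter.mpr fun c => ?_
  set v : ℝ := (π₁ : ℝ) * (5 / 4) + (π₂ : ℝ) * (3 / 2) with hv
  by_cases hin : (c : ℝ) < v ∧ v < (c : ℝ) + 1
  swap
  · -- the point itself avoids the strip
    refine subset_convexHull ℝ _ ⟨?_, ?_⟩
    · rw [hP]; norm_num
    · intro hs
      exact hin hs
  -- the point is inside the strip
  by_cases hbig1 : π₁ ≤ -2 ∨ 2 ≤ π₁
  · -- horizontal direction with step 1/π₁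
    have hne : (π₁ : ℝ) ≠ 0 := by
      rcases hbig1 with h | h
      · have : (π₁ : ℝ) ≤ -2 := by exact_mod_cast h
        linarith
      · have : (2 : ℝ) ≤ (π₁ : ℝ) := by exact_mod_cast h
        linarith
    set u : ℝ := 1 / (π₁ : ℝ) with hu
    have hub : -(1 / 2) ≤ u ∧ u ≤ 1 / 2 := by
      rcases hbig1 with h | h
      · have ht : (π₁ : ℝ) ≤ -2 := by exact_mod_cast h
        have h1 : u < 0 := by
          rw [hu, one_div_neg]; linarith
        have h2 : 1 / (-(π₁ : ℝ)) ≤ 1 / 2 := by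
          apply one_div_le_one_div_of_le <;> linarith
        rw [one_div_neg_eq_neg_one_div] at h2
        constructor <;> [linarith; linarith]
      · have ht : (2 : ℝ) ≤ (π₁ : ℝ) := by exact_mod_cast h
        have h1 : 0 < u := by rw [hu, one_div_pos]; linarith
        have h2 : u ≤ 1 / 2 := by
          rw [hu]; apply one_div_le_one_div_of_le <;> linarith
        constructor <;> [linarith; linarith]
    have hmul : (π₁ : ℝ) * u = 1 := by
      rw [hu]; field_simp
    refine small_case P _ ((5 / 4 - u, 3 / 2) : ℝ × ℝ) ((5 / 4 + u, 3 / 2) : ℝ × ℝ) _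
      (1 / 2) (1 / 2) ?_ ?_ ?_ ?_ (by norm_num) (by norm_num) (by norm_num) ?_
    · rw [hP]; simp only [mem_setOf_eq]
      refine ⟨by linarith [hub.1, hub.2], by linarith [hub.1, hub.2],
        by norm_num, by norm_num, by nlinarith [hub.1, hub.2], by nlinarith [hub.1, hub.2]⟩
    · rw [hP]; simp only [mem_setOf_eq]
      refine ⟨by linarith [hub.1, hub.2], by linarith [hub.1, hub.2],
        by norm_num, by norm_num, by nlinarith [hub.1, hub.2], by nlinarith [hub.1, hub.2]⟩
    · intro hs
      simp only [mem_setOf_eq] at hs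
      have hval : (π₁ : ℝ) * (5 / 4 - u) + (π₂ : ℝ) * (3 / 2) = v - 1 := by
        rw [hv]; linear_combination (-1 : ℝ) * hmul
      rw [hval] at hs
      linarith [hin.2, hs.1]
    · intro hs
      simp only [mem_setOf_eq] at hs
      have hval : (π₁ : ℝ) * (5 / 4 + u) + (π₂ : ℝ) * (3 / 2) = v + 1 := by
        rw [hv]; linear_combination hmul
      rw [hval] at hs
      linarith [hin.1, hs.2]
    · simp only [Prod.smul_mk, Prod.mk_add_mk, smul_eq_mul, Prod.mk.injEq]
      constructor <;> ring
  by_cases hbig2 : π₂ ≤ -3 ∨ 3 ≤ π₂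
  · -- vertical direction with step 1/π₂
    have hne : (π₂ : ℝ) ≠ 0 := by
      rcases hbig2 with h | h
      · have : (π₂ : ℝ) ≤ -3 := by exact_mod_cast h
        linarith
      · have : (3 : ℝ) ≤ (π₂ : ℝ) := by exact_mod_cast h
        linarith
    set u : ℝ := 1 / (π₂ : ℝ) with hu
    have hub : -(1 / 3) ≤ u ∧ u ≤ 1 / 3 := by
      rcases hbig2 with h | h
      · have ht : (π₂ : ℝ) ≤ -3 := by exact_mod_cast h
        have h1 : u < 0 := by rw [hu, one_div_neg]; linarith
        have h2 : 1 / (-(π₂ : ℝ)) ≤ 1 / 3 := by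
          apply one_div_le_one_div_of_le <;> linarith
        rw [one_div_neg_eq_neg_one_div] at h2
        constructor <;> [linarith; linarith]
      · have ht : (3 : ℝ) ≤ (π₂ : ℝ) := by exact_mod_cast h
        have h1 : 0 < u := by rw [hu, one_div_pos]; linarith
        have h2 : u ≤ 1 / 3 := by
          rw [hu]; apply one_div_le_one_div_of_le <;> linarith
        constructor <;> [linarith; linarith]
    have hmul : (π₂ : ℝ) * u = 1 := by rw [hu]; field_simp
    refine small_case P _ ((5 / 4, 3 / 2 - u) : ℝ × ℝ) ((5 / 4, 3 / 2 + u) : ℝ × ℝ) _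
      (1 / 2) (1 / 2) ?_ ?_ ?_ ?_ (by norm_num) (by norm_num) (by norm_num) ?_
    · rw [hP]; simp only [mem_setOf_eq]
      refine ⟨by norm_num, by norm_num, by linarith [hub.1, hub.2],
        by linarith [hub.1, hub.2], by nlinarith [hub.1, hub.2], by nlinarith [hub.1, hub.2]⟩
    · rw [hP]; simp only [mem_setOf_eq]
      refine ⟨by norm_num, by norm_num, by linarith [hub.1, hub.2],
        by linarith [hub.1, hub.2], by nlinarith [hub.1, hub.2], by nlinarith [hub.1, hub.2]⟩
    · intro hs
      simp only [mem_setOf_eq] at hs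
      have hval : (π₁ : ℝ) * (5 / 4) + (π₂ : ℝ) * (3 / 2 - u) = v - 1 := by
        rw [hv]; linear_combination (-1 : ℝ) * hmul
      rw [hval] at hs
      linarith [hin.2, hs.1]
    · intro hs
      simp only [mem_setOf_eq] at hs
      have hval : (π₁ : ℝ) * (5 / 4) + (π₂ : ℝ) * (3 / 2 + u) = v + 1 := by
        rw [hv]; linear_combination hmul
      rw [hval] at hs
      linarith [hin.1, hs.2]
    · simp only [Prod.smul_mk, Prod.mk_add_mk, smul_eq_mul, Prod.mk.injEq]
      constructor <;> ring
  -- small coefficients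
  push_neg at hbig1 hbig2
  obtain ⟨hb1, hb2⟩ := hbig1
  obtain ⟨hb3, hb4⟩ := hbig2
  have hπ₁l : -1 ≤ π₁ := by omega
  have hπ₁u : π₁ ≤ 1 := by omega
  have hπ₂l : -2 ≤ π₂ := by omega
  have hπ₂u : π₂ ≤ 2 := by omega
  interval_cases π₁ <;> interval_cases π₂
  · -- π = (-1,-2): pair (7/6,17/12) f=-4, (3/2,7/4) f=-5
    exact small_case P _ ((7/6, 17/12) : ℝ × ℝ) ((3/2, 7/4) : ℝ × ℝ) _ (3/4) (1/4)
      (by rw [hP]; simp only [mem_setOf_eq]; norm_num)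
      (by rw [hP]; simp only [mem_setOf_eq]; norm_num)
      (fun hs => not_strip c (-4) _ (by norm_num) hs)
      (fun hs => not_strip c (-5) _ (by norm_num) hs)
      (by norm_num) (by norm_num) (by norm_num)
      (by simp only [Prod.smul_mk, Prod.mk_add_mk, smul_eq_mul, Prod.mk.injEq]
          constructor <;> norm_num)
  · -- π = (-1,-1): pair (1,1) f=-2, (4/3,5/3) f=-3
    exact small_case P _ ((1, 1) : ℝ × ℝ) ((4/3, 5/3) : ℝ × ℝ) _ (1/4) (3/4)
      (by rw [hP]; simp only [mem_setOf_eq]; norm_num)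
      (by rw [hP]; simp only [mem_setOf_eq]; norm_num)
      (fun hs => not_strip c (-2) _ (by norm_num) hs)
      (fun hs => not_strip c (-3) _ (by norm_num) hs)
      (by norm_num) (by norm_num) (by norm_num)
      (by simp only [Prod.smul_mk, Prod.mk_add_mk, smul_eq_mul, Prod.mk.injEq]
          constructor <;> norm_num)
  · -- π = (-1,0): pair (1,5/3) f=-1, (2,1) f=-2
    exact small_case P _ ((1, 5/3) : ℝ × ℝ) ((2, 1) : ℝ × ℝ) _ (3/4) (1/4)
      (by rw [hP]; simp only [mem_setOf_eq]; norm_num)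
      (by rw [hP]; simp only [mem_setOf_eq]; norm_num)
      (fun hs => not_strip c (-1) _ (by norm_num) hs)
      (fun hs => not_strip c (-2) _ (by norm_num) hs)
      (by norm_num) (by norm_num) (by norm_num)
      (by simp only [Prod.smul_mk, Prod.mk_add_mk, smul_eq_mul, Prod.mk.injEq]
          constructor <;> norm_num)
  · -- π = (-1,1): pair (0,1) f=1, (5/3,5/3) f=0
    exact small_case P _ ((0, 1) : ℝ × ℝ) ((5/3, 5/3) : ℝ × ℝ) _ (1/4) (3/4)
      (by rw [hP]; simp only [mem_setOf_eq]; norm_num)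
      (by rw [hP]; simp only [mem_setOf_eq]; norm_num)
      (fun hs => not_strip c 1 _ (by norm_num) hs)
      (fun hs => not_strip c 0 _ (by norm_num) hs)
      (by norm_num) (by norm_num) (by norm_num)
      (by simp only [Prod.smul_mk, Prod.mk_add_mk, smul_eq_mul, Prod.mk.injEq]
          constructor <;> norm_num)
  · -- π = (-1,2): pair (8/5,9/5) f=2, (1/5,3/5) f=1
    exact small_case P _ ((8/5, 9/5) : ℝ × ℝ) ((1/5, 3/5) : ℝ × ℝ) _ (3/4) (1/4)
      (by rw [hP]; simp only [mem_setOf_eq]; norm_num)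
      (by rw [hP]; simp only [mem_setOf_eq]; norm_num)
      (fun hs => not_strip c 2 _ (by norm_num) hs)
      (fun hs => not_strip c 1 _ (by norm_num) hs)
      (by norm_num) (by norm_num) (by norm_num)
      (by simp only [Prod.smul_mk, Prod.mk_add_mk, smul_eq_mul, Prod.mk.injEq]
          constructor <;> norm_num)
  · -- π = (0,-2): v = -3 integer, contradiction
    rw [hv] at hin
    exact absurd hin (not_strip c (-3) _ (by norm_num))
  · -- π = (0,-1): pair (1,1) f=-1, (3/2,2) f=-2
    exact small_case P _ ((1, 1) : ℝ × ℝ) ((3/2, 2) : ℝ × ℝ) _ (1/2) (1/2)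
      (by rw [hP]; simp only [mem_setOf_eq]; norm_num)
      (by rw [hP]; simp only [mem_setOf_eq]; norm_num)
      (fun hs => not_strip c (-1) _ (by norm_num) hs)
      (fun hs => not_strip c (-2) _ (by norm_num) hs)
      (by norm_num) (by norm_num) (by norm_num)
      (by simp only [Prod.smul_mk, Prod.mk_add_mk, smul_eq_mul, Prod.mk.injEq]
          constructor <;> norm_num)
  · -- π = (0,0): v = 0 integer
    rw [hv] at hin
    exact absurd hin (not_strip c 0 _ (by norm_num))
  · -- π = (0,1): pair (1,1) f=1, (3/2,2) f=2
    exact small_case P _ ((1, 1) : ℝ × ℝ) ((3/2, 2) : ℝ × ℝ) _ (1/2) (1/2)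
      (by rw [hP]; simp only [mem_setOf_eq]; norm_num)
      (by rw [hP]; simp only [mem_setOf_eq]; norm_num)
      (fun hs => not_strip c 1 _ (by norm_num) hs)
      (fun hs => not_strip c 2 _ (by norm_num) hs)
      (by norm_num) (by norm_num) (by norm_num)
      (by simp only [Prod.smul_mk, Prod.mk_add_mk, smul_eq_mul, Prod.mk.injEq]
          constructor <;> norm_num)
  · -- π = (0,2): v = 3 integer
    rw [hv] at hin
    exact absurd hin (not_strip c 3 _ (by norm_num))
  · -- π = (1,-2): pair (8/5,9/5) f=-2, (1/5,3/5) f=-1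
    exact small_case P _ ((8/5, 9/5) : ℝ × ℝ) ((1/5, 3/5) : ℝ × ℝ) _ (3/4) (1/4)
      (by rw [hP]; simp only [mem_setOf_eq]; norm_num)
      (by rw [hP]; simp only [mem_setOf_eq]; norm_num)
      (fun hs => not_strip c (-2) _ (by norm_num) hs)
      (fun hs => not_strip c (-1) _ (by norm_num) hs)
      (by norm_num) (by norm_num) (by norm_num)
      (by simp only [Prod.smul_mk, Prod.mk_add_mk, smul_eq_mul, Prod.mk.injEq]
          constructor <;> norm_num)
  · -- π = (1,-1): pair (0,1) f=-1, (5/3,5/3) f=0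
    exact small_case P _ ((0, 1) : ℝ × ℝ) ((5/3, 5/3) : ℝ × ℝ) _ (1/4) (3/4)
      (by rw [hP]; simp only [mem_setOf_eq]; norm_num)
      (by rw [hP]; simp only [mem_setOf_eq]; norm_num)
      (fun hs => not_strip c (-1) _ (by norm_num) hs)
      (fun hs => not_strip c 0 _ (by norm_num) hs)
      (by norm_num) (by norm_num) (by norm_num)
      (by simp only [Prod.smul_mk, Prod.mk_add_mk, smul_eq_mul, Prod.mk.injEq]
          constructor <;> norm_num)
  · -- π = (1,0): pair (1,5/3) f=1, (2,1) f=2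
    exact small_case P _ ((1, 5/3) : ℝ × ℝ) ((2, 1) : ℝ × ℝ) _ (3/4) (1/4)
      (by rw [hP]; simp only [mem_setOf_eq]; norm_num)
      (by rw [hP]; simp only [mem_setOf_eq]; norm_num)
      (fun hs => not_strip c 1 _ (by norm_num) hs)
      (fun hs => not_strip c 2 _ (by norm_num) hs)
      (by norm_num) (by norm_num) (by norm_num)
      (by simp only [Prod.smul_mk, Prod.mk_add_mk, smul_eq_mul, Prod.mk.injEq]
          constructor <;> norm_num)
  · -- π = (1,1): pair (1,1) f=2, (4/3,5/3) f=3
    exact small_case P _ ((1, 1) : ℝ × ℝ) ((4/3, 5/3) : ℝ × ℝ) _ (1/4) (3/4)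
      (by rw [hP]; simp only [mem_setOf_eq]; norm_num)
      (by rw [hP]; simp only [mem_setOf_eq]; norm_num)
      (fun hs => not_strip c 2 _ (by norm_num) hs)
      (fun hs => not_strip c 3 _ (by norm_num) hs)
      (by norm_num) (by norm_num) (by norm_num)
      (by simp only [Prod.smul_mk, Prod.mk_add_mk, smul_eq_mul, Prod.mk.injEq]
          constructor <;> norm_num)
  · -- π = (1,2): pair (7/6,17/12) f=4, (3/2,7/4) f=5
    exact small_case P _ ((7/6, 17/12) : ℝ × ℝ) ((3/2, 7/4) : ℝ × ℝ) _ (3/4) (1/4)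
      (by rw [hP]; simp only [mem_setOf_eq]; norm_num)
      (by rw [hP]; simp only [mem_setOf_eq]; norm_num)
      (fun hs => not_strip c 4 _ (by norm_num) hs)
      (fun hs => not_strip c 5 _ (by norm_num) hs)
      (by norm_num) (by norm_num) (by norm_num)
      (by simp only [Prod.smul_mk, Prod.mk_add_mk, smul_eq_mul, Prod.mk.injEq]
          constructor <;> norm_num)

theorem stmt10 (P : Set (ℝ × ℝ))
    (hP : P = {x | 0 ≤ x.1 ∧ x.1 ≤ 2 ∧ 0 ≤ x.2 ∧ x.2 ≤ 2 ∧
      2 * x.1 + x.2 ≤ 5 ∧ -2 * x.1 + 3 * x.2 ≤ 3})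
    (PL : Set ((ℝ × ℝ) × ((ℝ × ℝ) × (ℝ × ℝ))))
    (hPL : PL = {p | p.1 ∈ P ∧
      (0 ≤ p.2.1.1 ∧ p.2.1.1 ≤ 1) ∧ (0 ≤ p.2.1.2 ∧ p.2.1.2 ≤ 1) ∧
      (0 ≤ p.2.2.1 ∧ p.2.2.1 ≤ 1) ∧ (0 ≤ p.2.2.2 ∧ p.2.2.2 ≤ 1) ∧
      p.1.1 = p.2.1.1 + 2 * p.2.1.2 ∧ p.1.2 = p.2.2.1 + 2 * p.2.2.2}) :
    Prod.fst '' splitClosure splitsAll PL ⊂ splitClosure splitsXY P ∧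
    ((5 / 4 : ℝ), (3 / 2 : ℝ)) ∈ splitClosure splitsXY P ∧
    (∀ p ∈ splitClosure splitsAll PL, p.1.2 ≤ 7 / 5) := by
  have h2 : ((5 / 4 : ℝ), (3 / 2 : ℝ)) ∈ splitClosure splitsXY P := key_mem P hP
  -- Part 3: the bound x₂ ≤ 7/5 on the split closure of PL
  have h3 : ∀ p ∈ splitClosure splitsAll PL, p.1.2 ≤ 7 / 5 := by
    intro p hp
    rw [splitClosure] at hp
    -- split 1 : 0 < z₁₂ < 1
    set f₁ : ((ℝ × ℝ) × ((ℝ × ℝ) × (ℝ × ℝ))) → ℝ := fun q =>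
      ((0 : ℤ) : ℝ) * q.1.1 + ((0 : ℤ) : ℝ) * q.1.2 +
      ((0 : ℤ) : ℝ) * q.2.1.1 + ((1 : ℤ) : ℝ) * q.2.1.2 +
      ((0 : ℤ) : ℝ) * q.2.2.1 + ((0 : ℤ) : ℝ) * q.2.2.2 with hf₁
    have hf₁mem : f₁ ∈ splitsAll := ⟨0, 0, 0, 1, 0, 0, rfl⟩
    have hp1 := mem_iInter.mp (mem_iInter₂.mp hp f₁ hf₁mem) (0 : ℤ)
    -- split 2 : 1 < -z₁₂ + z₂₁ + 2 z₂₂ < 2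
    set f₂ : ((ℝ × ℝ) × ((ℝ × ℝ) × (ℝ × ℝ))) → ℝ := fun q =>
      ((0 : ℤ) : ℝ) * q.1.1 + ((0 : ℤ) : ℝ) * q.1.2 +
      ((0 : ℤ) : ℝ) * q.2.1.1 + ((-1 : ℤ) : ℝ) * q.2.1.2 +
      ((1 : ℤ) : ℝ) * q.2.2.1 + ((2 : ℤ) : ℝ) * q.2.2.2 with hf₂
    have hf₂mem : f₂ ∈ splitsAll := ⟨0, 0, 0, -1, 1, 2, rfl⟩
    have hp2 := mem_iInter.mp (mem_iInter₂.mp hp f₂ hf₂mem) (1 : ℤ)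
    -- the first split implies the cuts z₁₁ + z₁₂ ≤ 1 and -2 z₁₁ + 3 z₂₁ + 6 z₂₂ ≤ 3
    set K₁ : Set ((ℝ × ℝ) × ((ℝ × ℝ) × (ℝ × ℝ))) :=
      {q | q.2.1.1 + q.2.1.2 ≤ 1 ∧
        -2 * q.2.1.1 + 3 * q.2.2.1 + 6 * q.2.2.2 ≤ 3 ∧
        q.1.2 = q.2.2.1 + 2 * q.2.2.2} with hK₁
    have hK₁conv : Convex ℝ K₁ := by
      intro x hx y hy a b ha hb hab
      simp only [hK₁, mem_setOf_eq, Prod.fst_add, Prod.snd_add, Prod.smul_fst,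
        Prod.smul_snd, smul_eq_mul] at hx hy ⊢
      obtain ⟨x1, x2, x3⟩ := hx
      obtain ⟨y1, y2, y3⟩ := hy
      refine ⟨?_, ?_, ?_⟩
      · nlinarith [mul_le_mul_of_nonneg_left x1 ha, mul_le_mul_of_nonneg_left y1 hb]
      · nlinarith [mul_le_mul_of_nonneg_left x2 ha, mul_le_mul_of_nonneg_left y2 hb]
      · linear_combination a * x3 + b * y3
    have hsub1 : PL \ {x | ((0 : ℤ) : ℝ) < f₁ x ∧ f₁ x < ((0 : ℤ) : ℝ) + 1} ⊆ K₁ := by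
      rintro q ⟨hqPL, hqS⟩
      rw [hPL] at hqPL
      simp only [mem_setOf_eq] at hqPL
      obtain ⟨hqP, hz11, hz12, hz21, hz22, he1, he2⟩ := hqPL
      rw [hP] at hqP
      simp only [mem_setOf_eq] at hqP
      obtain ⟨g1, g2, g3, g4, g5, g6⟩ := hqP
      simp only [mem_setOf_eq, not_and, not_lt, hf₁] at hqS
      push_cast at hqS
      simp only [hK₁, mem_setOf_eq]
      rcases le_or_gt q.2.1.2 0 with hc | hc
      · exact ⟨by linarith, by linarith, he2⟩
      · have h1' : (1 : ℝ) ≤ q.2.1.2 := by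
          have := hqS (by linarith)
          linarith
        exact ⟨by linarith, by linarith, he2⟩
    have hpK₁ : p ∈ K₁ := convexHull_min hsub1 hK₁conv hp1
    -- the second split implies the cut z₂₁ + 2 z₂₂ - z₁₂ ≤ 1
    set K₂ : Set ((ℝ × ℝ) × ((ℝ × ℝ) × (ℝ × ℝ))) :=
      {q | q.2.2.1 + 2 * q.2.2.2 - q.2.1.2 ≤ 1} with hK₂
    have hK₂conv : Convex ℝ K₂ := by
      intro x hx y hy a b ha hb hab
      simp only [hK₂, mem_setOf_eq, Prod.fst_add, Prod.snd_add, Prod.smul_fst,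
        Prod.smul_snd, smul_eq_mul] at hx hy ⊢
      nlinarith [mul_le_mul_of_nonneg_left hx ha, mul_le_mul_of_nonneg_left hy hb]
    have hsub2 : PL \ {x | ((1 : ℤ) : ℝ) < f₂ x ∧ f₂ x < ((1 : ℤ) : ℝ) + 1} ⊆ K₂ := by
      rintro q ⟨hqPL, hqS⟩
      rw [hPL] at hqPL
      simp only [mem_setOf_eq] at hqPL
      obtain ⟨hqP, hz11, hz12, hz21, hz22, he1, he2⟩ := hqPL
      rw [hP] at hqP
      simp only [mem_setOf_eq] at hqP
      obtain ⟨g1, g2, g3, g4, g5, g6⟩ := hqP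
      simp only [mem_setOf_eq, not_and, not_lt, hf₂] at hqS
      push_cast at hqS
      simp only [hK₂, mem_setOf_eq]
      rcases le_or_gt (-q.2.1.2 + q.2.2.1 + 2 * q.2.2.2) 1 with hc | hc
      · linarith
      · have h2' : (2 : ℝ) ≤ -q.2.1.2 + q.2.2.1 + 2 * q.2.2.2 := by
          have := hqS (by linarith)
          linarith
        -- contradiction: z₁₂ ≤ 0 forces x₁ ≤ 1, but x₂ ≥ 2 forces x₁ ≥ 3/2
        linarith
    have hpK₂ : p ∈ K₂ := convexHull_min hsub2 hK₂conv hp2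
    simp only [hK₁, mem_setOf_eq] at hpK₁
    simp only [hK₂, mem_setOf_eq] at hpK₂
    obtain ⟨c1, c2, c3⟩ := hpK₁
    linarith
  -- Part 1: the projection is contained in SC(P)
  have h1 : Prod.fst '' splitClosure splitsAll PL ⊆ splitClosure splitsXY P := by
    rintro x ⟨p, hp, rfl⟩
    rw [splitClosure] at hp ⊢
    refine mem_iInter₂.mpr ?_
    rintro f ⟨π₁, π₂, rfl⟩
    refine mem_iInter.mpr fun c => ?_
    set F : ((ℝ × ℝ) × ((ℝ × ℝ) × (ℝ × ℝ))) → ℝ := fun q =>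
      (π₁ : ℝ) * q.1.1 + (π₂ : ℝ) * q.1.2 +
      ((0 : ℤ) : ℝ) * q.2.1.1 + ((0 : ℤ) : ℝ) * q.2.1.2 +
      ((0 : ℤ) : ℝ) * q.2.2.1 + ((0 : ℤ) : ℝ) * q.2.2.2 with hF
    have hFmem : F ∈ splitsAll := ⟨π₁, π₂, 0, 0, 0, 0, rfl⟩
    have hpc := mem_iInter.mp (mem_iInter₂.mp hp F hFmem) c
    set L : ((ℝ × ℝ) × ((ℝ × ℝ) × (ℝ × ℝ))) →ₗ[ℝ] (ℝ × ℝ) :=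
      LinearMap.fst ℝ (ℝ × ℝ) ((ℝ × ℝ) × (ℝ × ℝ)) with hL
    have himg : L p ∈ L '' convexHull ℝ
        (PL \ {x | (c : ℝ) < F x ∧ F x < (c : ℝ) + 1}) := mem_image_of_mem L hpc
    rw [L.image_convexHull] at himg
    have hmono : L '' (PL \ {x | (c : ℝ) < F x ∧ F x < (c : ℝ) + 1}) ⊆
        P \ {x | (c : ℝ) < (π₁ : ℝ) * x.1 + (π₂ : ℝ) * x.2 ∧
          (π₁ : ℝ) * x.1 + (π₂ : ℝ) * x.2 < (c : ℝ) + 1} := by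
      rintro _ ⟨q, ⟨hqPL, hqS⟩, rfl⟩
      have hq1 : q.1 ∈ P := by
        rw [hPL] at hqPL
        exact hqPL.1
      rw [show L q = q.1 from rfl]
      refine ⟨hq1, fun hs => hqS ?_⟩
      simp only [mem_setOf_eq] at hs ⊢
      have hkey : F q = (π₁ : ℝ) * q.1.1 + (π₂ : ℝ) * q.1.2 := by
        simp only [hF]; push_cast; ring
      rw [hkey]
      exact hs
    exact convexHull_mono hmono himg
  refine ⟨?_, h2, h3⟩
  rw [ssubset_iff_subset_ne]
  refine ⟨h1, fun heq => ?_⟩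
  have : ((5 / 4 : ℝ), (3 / 2 : ℝ)) ∈ Prod.fst '' splitClosure splitsAll PL := by
    rw [heq]; exact h2
  obtain ⟨p, hpmem, hpe⟩ := this
  have hb := h3 p hpmem
  have : p.1.2 = 3 / 2 := by rw [hpe]
  linarith
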